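/- If a numerical differentiation formula for a linear differential operator D of order k with ∑_{|α|=k}|c_α(z)| ≠ 0 is exact of order q > k, then the ℓ₁-norm of its weight vector satisfies ‖w‖₁ ≥ C h_{z,X}^{-k}, where C = α₀!|c_{α₀}(z)| for some multi-index α₀ with |α₀| = k and c_{α₀}(z) ≠ 0, and h_{z,X} = max_j ‖z - xⱼ‖₂. -/

import Mathlib

open scoped BigOperators

/-- Partial derivative in the `i`-th coordinate direction. -/
noncomputable def pd {d : ℕ} (i : Fin d) (f : EuclideanSpace ℝ (Fin d) → ℝ) :
    EuclideanSpace ℝ (Fin d) → ℝ :=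
  fun x => lineDeriv ℝ f x (EuclideanSpace.single i 1)

/-- Multi-index partial derivative ∂^α f. -/
noncomputable def pdMulti {d : ℕ} (α : Fin d → ℕ) (f : EuclideanSpace ℝ (Fin d) → ℝ) :
    EuclideanSpace ℝ (Fin d) → ℝ :=
  (List.ofFn (fun i : Fin d => (pd i)^[α i])).foldr (· ∘ ·) id f

/-- The linear differential operator D = ∑_{|α|≤k} c_α ∂^α applied to f at y. -/
noncomputable def Dapply {d : ℕ} (k : ℕ)
    (c : (Fin d → ℕ) → EuclideanSpace ℝ (Fin d) → ℝ)
    (f : EuclideanSpace ℝ (Fin d) → ℝ) (y : EuclideanSpace ℝ (Fin d)) : ℝ :=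
  ∑ s ∈ Finset.range (k + 1), ∑ α ∈ Finset.Nat.antidiagonalTuple d s,
    c α y * pdMulti α f y

/-- Evaluation of a d-variate polynomial at a point of ℝ^d. -/
noncomputable def evalP {d : ℕ} (p : MvPolynomial (Fin d) ℝ)
    (y : EuclideanSpace ℝ (Fin d)) : ℝ :=
  MvPolynomial.eval (fun i => y i) p

lemma pd_prod {d : ℕ} (z : EuclideanSpace ℝ (Fin d)) (i : Fin d) (a : ℝ) (m : Fin d → ℕ) :
    pd i (fun y => a * ∏ j, (y j - z j) ^ (m j)) =
      fun y => (a * m i) * ∏ j, (y j - z j) ^ (Function.update m i (m i - 1) j) := by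
  funext y
  have hmem : i ∈ Finset.univ := Finset.mem_univ i
  have key : ∀ t : ℝ,
      (fun y' : EuclideanSpace ℝ (Fin d) => a * ∏ j, (y' j - z j) ^ (m j))
        (y + t • EuclideanSpace.single i 1)
      = a * ((y i - z i + t) ^ (m i) * ∏ j ∈ Finset.univ.erase i, (y j - z j) ^ (m j)) := by
    intro t
    simp only
    rw [← Finset.mul_prod_erase Finset.univ _ hmem]
    congr 1
    congr 1
    · have : ((y + t • EuclideanSpace.single i 1 : EuclideanSpace ℝ (Fin d)) i) = y i + t := by
        simp [EuclideanSpace.single_apply]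
      rw [this]; ring_nf
    · apply Finset.prod_congr rfl
      intro j hj
      have hji : j ≠ i := (Finset.mem_erase.mp hj).1
      have : ((y + t • EuclideanSpace.single i 1 : EuclideanSpace ℝ (Fin d)) j) = y j := by
        simp [EuclideanSpace.single_apply, hji]
      rw [this]
  have hd : HasDerivAt (fun t : ℝ =>
      (fun y' : EuclideanSpace ℝ (Fin d) => a * ∏ j, (y' j - z j) ^ (m j))
        (y + t • EuclideanSpace.single i 1))
      (a * ((m i * (y i - z i) ^ (m i - 1)) * ∏ j ∈ Finset.univ.erase i, (y j - z j) ^ (m j)))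
      0 := by
    simp only [key]
    have h1 : HasDerivAt (fun t : ℝ => (y i - z i + t)) 1 0 :=
      (hasDerivAt_id (0:ℝ)).const_add (y i - z i)
    have h2 := (h1.pow (m i)).mul_const (∏ j ∈ Finset.univ.erase i, (y j - z j) ^ (m j))
    have h3 := h2.const_mul a
    refine h3.congr_deriv ?_
    simp
  rw [pd, lineDeriv, hd.deriv]
  rw [← Finset.mul_prod_erase Finset.univ
      (fun j => (y j - z j) ^ (Function.update m i (m i - 1) j)) hmem]
  rw [Function.update_self]
  have : ∏ j ∈ Finset.univ.erase i, (y j - z j) ^ (Function.update m i (m i - 1) j)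
      = ∏ j ∈ Finset.univ.erase i, (y j - z j) ^ (m j) := by
    apply Finset.prod_congr rfl
    intro j hj
    rw [Function.update_of_ne (Finset.mem_erase.mp hj).1]
  rw [this]; ring

lemma pd_iter_prod {d : ℕ} (z : EuclideanSpace ℝ (Fin d)) (i : Fin d) (n : ℕ) (a : ℝ)
    (m : Fin d → ℕ) :
    (pd i)^[n] (fun y => a * ∏ j, (y j - z j) ^ (m j)) =
      fun y => (a * (m i).descFactorial n) *
        ∏ j, (y j - z j) ^ (Function.update m i (m i - n) j) := by
  induction n with
  | zero =>
    simp only [Function.iterate_zero, id_eq, Nat.descFactorial_zero, Nat.cast_one, mul_one,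
      Nat.sub_zero]
    funext y
    congr 1
    apply Finset.prod_congr rfl
    intro j _
    by_cases h : j = i
    · subst h; rw [Function.update_self]
    · rw [Function.update_of_ne h]
  | succ n ih =>
    rw [Function.iterate_succ_apply', ih, pd_prod]
    funext y
    have h1 : Function.update m i (m i - n) i = m i - n := Function.update_self _ _ _
    rw [h1]
    have h2 : Function.update (Function.update m i (m i - n)) i (m i - n - 1)
        = Function.update m i (m i - (n + 1)) := by
      funext j
      by_cases h : j = i
      · subst h; simp [Nat.sub_sub]
      · simp [Function.update_of_ne h]
    rw [h2]
    have h3 : (m i).descFactorial (n + 1) = (m i - n) * (m i).descFactorial n :=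
      Nat.descFactorial_succ _ _
    rw [h3]
    push_cast
    ring

lemma fold_prod {d : ℕ} (z : EuclideanSpace ℝ (Fin d)) (α : Fin d → ℕ) :
    ∀ (L : List (Fin d)), L.Nodup → ∀ (a : ℝ) (m : Fin d → ℕ),
    L.foldr (fun i r => (pd i)^[α i] r) (fun y => a * ∏ j, (y j - z j) ^ (m j)) =
      fun y => (a * ∏ i ∈ L.toFinset, ((m i).descFactorial (α i) : ℝ)) *
        ∏ j, (y j - z j) ^ (if j ∈ L then m j - α j else m j) := by
  intro L
  induction L with
  | nil => intro _ a m; simp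
  | cons i L ih =>
    intro hnd a m
    have hiL : i ∉ L := (List.nodup_cons.mp hnd).1
    have hndL : L.Nodup := (List.nodup_cons.mp hnd).2
    rw [List.foldr_cons, ih hndL, pd_iter_prod]
    funext y
    have hup : ∀ j, Function.update (fun j => if j ∈ L then m j - α j else m j) i
        ((if i ∈ L then m i - α i else m i) - α i) j
        = (if j ∈ i :: L then m j - α j else m j) := by
      intro j
      by_cases h : j = i
      · subst h
        rw [Function.update_self, if_neg hiL]
        simp
      · rw [Function.update_of_ne h]
        simp [List.mem_cons, h]
    have hcoef : (if i ∈ L then m i - α i else m i) = m i := by rw [if_neg hiL]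
    rw [hcoef]
    have htf : (i :: L).toFinset = insert i L.toFinset := by simp
    have hins : ∏ j ∈ (i :: L).toFinset, ((m j).descFactorial (α j) : ℝ)
        = ((m i).descFactorial (α i) : ℝ) * ∏ j ∈ L.toFinset, ((m j).descFactorial (α j) : ℝ) := by
      rw [htf, Finset.prod_insert (by simpa using hiL)]
    rw [hins]
    have : ∏ j, (y j - z j) ^ (Function.update (fun j => if j ∈ L then m j - α j else m j) i
          (m i - α i) j)
        = ∏ j, (y j - z j) ^ (if j ∈ i :: L then m j - α j else m j) := by
      apply Finset.prod_congr rfl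
      intro j _
      have := hup j
      rw [hcoef] at this
      rw [this]
    rw [this]
    ring

lemma foldr_comp_apply {β : Type*} : ∀ (L : List (β → β)) (f : β),
    (L.foldr (· ∘ ·) id) f = L.foldr (fun g r => g r) f := by
  intro L
  induction L with
  | nil => intro f; rfl
  | cons g L ih => intro f; simp [List.foldr_cons, ih]

lemma pdMulti_eq_foldr {d : ℕ} (α : Fin d → ℕ) (f : EuclideanSpace ℝ (Fin d) → ℝ) :
    pdMulti α f = (List.finRange d).foldr (fun i r => (pd i)^[α i] r) f := by
  rw [pdMulti, List.ofFn_eq_map, foldr_comp_apply, List.foldr_map]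

lemma pdMulti_prod {d : ℕ} (z : EuclideanSpace ℝ (Fin d)) (α m : Fin d → ℕ) :
    pdMulti α (fun y => ∏ j, (y j - z j) ^ (m j)) =
      fun y => (∏ i, ((m i).descFactorial (α i) : ℝ)) *
        ∏ j, (y j - z j) ^ (m j - α j) := by
  have h0 : (fun y : EuclideanSpace ℝ (Fin d) => ∏ j, (y j - z j) ^ (m j))
      = fun y => (1:ℝ) * ∏ j, (y j - z j) ^ (m j) := by funext y; rw [one_mul]
  rw [pdMulti_eq_foldr, h0, fold_prod z α (List.finRange d) (List.nodup_finRange d)]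
  funext y
  simp [List.mem_finRange]

lemma pdMulti_prod_at_z {d : ℕ} (z : EuclideanSpace ℝ (Fin d)) (α α₀ : Fin d → ℕ)
    (hne : α ≠ α₀) :
    pdMulti α (fun y => ∏ j, (y j - z j) ^ (α₀ j)) z = 0 := by
  rw [pdMulti_prod]
  simp only [sub_self]
  by_cases h : ∃ i, α₀ i < α i
  · obtain ⟨i, hi⟩ := h
    have : ((α₀ i).descFactorial (α i) : ℝ) = 0 := by
      rw [Nat.descFactorial_eq_zero_iff_lt.mpr hi]; norm_num
    rw [Finset.prod_eq_zero (Finset.mem_univ i) this, zero_mul]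
  · push_neg at h
    have : ∃ i, α i < α₀ i := by
      by_contra hc
      push_neg at hc
      exact hne (funext fun i => le_antisymm (h i) (hc i))
    obtain ⟨i, hi⟩ := this
    have hpos : 0 < α₀ i - α i := Nat.sub_pos_of_lt hi
    have h0 : (0:ℝ) ^ (α₀ i - α i) = 0 := zero_pow hpos.ne'
    have h2 : ∏ j, (0:ℝ) ^ (α₀ j - α j) = 0 := Finset.prod_eq_zero (Finset.mem_univ i) h0
    rw [h2, mul_zero]

lemma pdMulti_prod_self {d : ℕ} (z : EuclideanSpace ℝ (Fin d)) (α₀ : Fin d → ℕ) :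
    pdMulti α₀ (fun y => ∏ j, (y j - z j) ^ (α₀ j)) z
      = ∏ i, ((α₀ i).factorial : ℝ) := by
  rw [pdMulti_prod]
  simp [Nat.descFactorial_self]

lemma Dapply_prod {d k : ℕ} (c : (Fin d → ℕ) → EuclideanSpace ℝ (Fin d) → ℝ)
    (z : EuclideanSpace ℝ (Fin d)) (α₀ : Fin d → ℕ) (hsum : ∑ i, α₀ i = k) :
    Dapply k c (fun y => ∏ j, (y j - z j) ^ (α₀ j)) z
      = (∏ i, ((α₀ i).factorial : ℝ)) * c α₀ z := by
  rw [Dapply]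
  rw [Finset.sum_eq_single_of_mem k (Finset.self_mem_range_succ k)]
  · rw [Finset.sum_eq_single_of_mem α₀
      ((Finset.Nat.mem_antidiagonalTuple).mpr hsum)]
    · rw [pdMulti_prod_self]; ring
    · intro α hα hne
      rw [pdMulti_prod_at_z z α α₀ hne, mul_zero]
  · intro s hs hne
    apply Finset.sum_eq_zero
    intro α hα
    have hαs : ∑ i, α i = s := Finset.Nat.mem_antidiagonalTuple.mp hα
    have : α ≠ α₀ := by
      intro h; subst h; exact hne (hαs.symm.trans hsum)
    rw [pdMulti_prod_at_z z α α₀ this, mul_zero]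

lemma coord_abs_le_norm {d : ℕ} (v : EuclideanSpace ℝ (Fin d)) (i : Fin d) :
    |v i| ≤ ‖v‖ := by
  rw [EuclideanSpace.norm_eq]
  have h1 : ‖v i‖ ^ 2 ≤ ∑ j, ‖v j‖ ^ 2 :=
    Finset.single_le_sum (f := fun j => ‖v j‖ ^ 2) (fun j _ => sq_nonneg _) (Finset.mem_univ i)
  calc |v i| = Real.sqrt (‖v i‖ ^ 2) := by
        rw [Real.sqrt_sq (norm_nonneg _)]; simp [Real.norm_eq_abs]
    _ ≤ Real.sqrt (∑ j, ‖v j‖ ^ 2) := Real.sqrt_le_sqrt h1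

/-- If a numerical differentiation formula for a linear differential operator D
of order k (with ∑_{|α|=k} |c_α(z)| ≠ 0) is exact of order q > k, then
‖w‖₁ ≥ C·h_{z,X}^{-k} where C = α₀!·|c_{α₀}(z)| for some multi-index α₀ with |α₀| = k and
c_{α₀}(z) ≠ 0, and h_{z,X} = max_j ‖z - xⱼ‖. -/
theorem stability_lower_bound (d k q N : ℕ) (hq : k < q) (hN : 0 < N)
    (c : (Fin d → ℕ) → EuclideanSpace ℝ (Fin d) → ℝ)
    (z : EuclideanSpace ℝ (Fin d)) (x : Fin N → EuclideanSpace ℝ (Fin d)) (w : Fin N → ℝ)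
    (hc : ∑ α ∈ Finset.Nat.antidiagonalTuple d k, |c α z| ≠ 0)
    (hexact : ∀ p : MvPolynomial (Fin d) ℝ, p.totalDegree < q →
      Dapply k c (evalP p) z = ∑ j, w j * evalP p (x j)) :
    ∃ α₀ : Fin d → ℕ, (∑ i, α₀ i) = k ∧ c α₀ z ≠ 0 ∧
      ∑ j, |w j| ≥ (∏ i, ((α₀ i).factorial : ℝ)) * |c α₀ z| *
        ((Finset.univ.sup' (Finset.univ_nonempty_iff.mpr ⟨⟨0, hN⟩⟩)
            (fun j => ‖z - x j‖)) ^ (-(k : ℝ))) := by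
  classical
  obtain ⟨α₀, hα₀mem, hα₀ne⟩ := Finset.exists_ne_zero_of_sum_ne_zero hc
  have hsum : ∑ i, α₀ i = k := Finset.Nat.mem_antidiagonalTuple.mp hα₀mem
  have hcne : c α₀ z ≠ 0 := fun h => hα₀ne (by rw [h, abs_zero])
  refine ⟨α₀, hsum, hcne, ?_⟩
  set hX : ℝ := Finset.univ.sup' (Finset.univ_nonempty_iff.mpr ⟨⟨0, hN⟩⟩)
      (fun j => ‖z - x j‖) with hhX
  have hXnonneg : 0 ≤ hX := le_trans (norm_nonneg _)
    (Finset.le_sup' (fun j => ‖z - x j‖) (Finset.mem_univ ⟨0, hN⟩))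
  -- the polynomial
  set p : MvPolynomial (Fin d) ℝ :=
    ∏ i, (MvPolynomial.X i - MvPolynomial.C (z i)) ^ (α₀ i) with hp
  have hdeg : p.totalDegree < q := by
    have h1 : p.totalDegree ≤ ∑ i, ((MvPolynomial.X i - MvPolynomial.C (z i)) ^ (α₀ i)).totalDegree :=
      MvPolynomial.totalDegree_finset_prod _ _
    have h2 : ∀ i : Fin d,
        ((MvPolynomial.X i - MvPolynomial.C (z i)) ^ (α₀ i)).totalDegree ≤ α₀ i := by
      intro i
      calc ((MvPolynomial.X (R := ℝ) i - MvPolynomial.C (z i)) ^ (α₀ i)).totalDegree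
          ≤ α₀ i * (MvPolynomial.X (R := ℝ) i - MvPolynomial.C (z i)).totalDegree :=
            MvPolynomial.totalDegree_pow _ _
        _ ≤ α₀ i * 1 := by
            apply Nat.mul_le_mul_left
            calc (MvPolynomial.X (R := ℝ) i - MvPolynomial.C (z i)).totalDegree
                ≤ max (MvPolynomial.X (R := ℝ) i).totalDegree
                    (MvPolynomial.C (R := ℝ) (z i)).totalDegree :=
                  MvPolynomial.totalDegree_sub _ _
              _ ≤ 1 := by simp [MvPolynomial.totalDegree_X, MvPolynomial.totalDegree_C]
        _ = α₀ i := mul_one _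
    calc p.totalDegree ≤ ∑ i, ((MvPolynomial.X i - MvPolynomial.C (z i)) ^ (α₀ i)).totalDegree := h1
      _ ≤ ∑ i, α₀ i := by
          apply Finset.sum_le_sum
          intro i _
          exact h2 i
      _ = k := hsum
      _ < q := hq
  have heval : evalP p = fun y : EuclideanSpace ℝ (Fin d) => ∏ j, (y j - z j) ^ (α₀ j) := by
    funext y
    simp [evalP, hp, MvPolynomial.eval_prod]
  have hkey : (∏ i, ((α₀ i).factorial : ℝ)) * c α₀ z
      = ∑ j, w j * ∏ i, ((x j) i - z i) ^ (α₀ i) := by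
    have := hexact p hdeg
    rw [heval] at this
    rw [Dapply_prod c z α₀ hsum] at this
    exact this
  have hfactpos : (0:ℝ) < ∏ i, ((α₀ i).factorial : ℝ) :=
    Finset.prod_pos (fun i _ => by positivity)
  -- bound on each |P(x j)|
  have hbound : ∀ j : Fin N, |∏ i, ((x j) i - z i) ^ (α₀ i)| ≤ hX ^ k := by
    intro j
    have hle : ‖z - x j‖ ≤ hX := Finset.le_sup' (fun j => ‖z - x j‖) (Finset.mem_univ j)
    calc |∏ i, ((x j) i - z i) ^ (α₀ i)| = ∏ i, |(x j) i - z i| ^ (α₀ i) := by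
          rw [Finset.abs_prod]; simp [abs_pow]
      _ ≤ ∏ i, ‖z - x j‖ ^ (α₀ i) := by
          apply Finset.prod_le_prod (fun i _ => by positivity)
          intro i _
          apply pow_le_pow_left₀ (abs_nonneg _)
          have : (x j) i - z i = -((z - x j) i) := by simp
          rw [this, abs_neg]
          exact coord_abs_le_norm (z - x j) i
      _ = ‖z - x j‖ ^ k := by rw [Finset.prod_pow_eq_pow_sum, hsum]
      _ ≤ hX ^ k := pow_le_pow_left₀ (norm_nonneg _) hle k
  have hmain : (∏ i, ((α₀ i).factorial : ℝ)) * |c α₀ z| ≤ (∑ j, |w j|) * hX ^ k := by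
    calc (∏ i, ((α₀ i).factorial : ℝ)) * |c α₀ z|
        = |(∏ i, ((α₀ i).factorial : ℝ)) * c α₀ z| := by
          rw [abs_mul, abs_of_pos hfactpos]
      _ = |∑ j, w j * ∏ i, ((x j) i - z i) ^ (α₀ i)| := by rw [hkey]
      _ ≤ ∑ j, |w j * ∏ i, ((x j) i - z i) ^ (α₀ i)| := Finset.abs_sum_le_sum_abs _ _
      _ ≤ ∑ j, |w j| * hX ^ k := by
          apply Finset.sum_le_sum
          intro j _
          rw [abs_mul]
          exact mul_le_mul_of_nonneg_left (hbound j) (abs_nonneg _)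
      _ = (∑ j, |w j|) * hX ^ k := by rw [Finset.sum_mul]
  by_cases hX0 : hX = 0
  · -- all points coincide with z
    have hxz : ∀ j, x j = z := by
      intro j
      have h1 : ‖z - x j‖ ≤ 0 := hX0 ▸ Finset.le_sup' (fun j => ‖z - x j‖) (Finset.mem_univ j)
      have h2 : z - x j = 0 := by
        have := le_antisymm h1 (norm_nonneg _)
        rwa [norm_eq_zero] at this
      exact (sub_eq_zero.mp h2).symm
    by_cases hk : k = 0
    · subst hk
      have hα0 : ∀ i, α₀ i = 0 := fun i =>
        (Finset.sum_eq_zero_iff.mp hsum) i (Finset.mem_univ i)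
      have hfact1 : ∏ i, ((α₀ i).factorial : ℝ) = 1 := by simp [hα0]
      have hP1 : ∀ j : Fin N, ∏ i, ((x j) i - z i) ^ (α₀ i) = 1 := fun j => by simp [hα0]
      rw [hfact1, one_mul] at hkey ⊢
      simp only [hP1, mul_one] at hkey
      rw [hX0, Nat.cast_zero, neg_zero, Real.rpow_zero, mul_one, ge_iff_le]
      calc |c α₀ z| = |∑ j, w j| := by rw [hkey]
        _ ≤ ∑ j, |w j| := Finset.abs_sum_le_sum_abs _ _
    · exfalso
      obtain ⟨i, hi⟩ : ∃ i, α₀ i ≠ 0 := by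
        by_contra hcon
        push_neg at hcon
        exact hk (by rw [← hsum]; exact Finset.sum_eq_zero fun i _ => hcon i)
      have hP0 : ∀ j : Fin N, ∏ i, ((x j) i - z i) ^ (α₀ i) = 0 := fun j =>
        Finset.prod_eq_zero (Finset.mem_univ i)
          (by rw [hxz j, sub_self]; exact zero_pow hi)
      simp only [hP0, mul_zero, Finset.sum_const_zero] at hkey
      rcases mul_eq_zero.mp hkey with h | h
      · exact absurd h hfactpos.ne'
      · exact hcne h
  · have hXpos : 0 < hX := lt_of_le_of_ne hXnonneg (Ne.symm hX0)
    have hrpow : hX ^ (-(k : ℝ)) = (hX ^ k)⁻¹ := by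
      rw [Real.rpow_neg hXnonneg, Real.rpow_natCast]
    rw [ge_iff_le, hrpow, mul_comm ((∏ i, ((α₀ i).factorial : ℝ)) * |c α₀ z|) _, ← div_eq_inv_mul,
      div_le_iff₀ (pow_pos hXpos k)]
    exact hmain
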